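/- Let z ∈ ℂ with |z| = 1, let x₀ ≥ 1 be an integer, and let C⁰, C¹ be 2×2 unitary complex matrices. Then |z^{2x₀} − C⁰₂₁ C¹₁₂|² = |C⁰₁₁ C¹₁₁|² + |C¹₂₁ z^{2x₀} + C⁰₂₁ · det C¹|². In particular, when z^{2x₀} ≠ C⁰₂₁C¹₁₂, the transmission probability T(z) = |C⁰₁₁C¹₁₁ / (z^{2x₀} − C⁰₂₁C¹₁₂)|² and the reflection probability R(z) = |(C¹₂₁ z^{2x₀} + C⁰₂₁ det C¹)/(z^{2x₀} − C⁰₂₁C¹₁₂)|² of the double barrier quantum walk satisfy T(z) + R(z) = 1. -/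

import Mathlib

open Matrix

/-- For `|z| = 1` and unitary coins `C⁰, C¹`:
`|z^{2x₀} - C⁰₂₁C¹₁₂|² = |C⁰₁₁C¹₁₁|² + |C¹₂₁ z^{2x₀} + C⁰₂₁ det C¹|²`;
in particular the transmission and reflection probabilities of the double barrier
quantum walk sum to one. -/
theorem stmt6 (z : ℂ) (hz : ‖z‖ = 1) (x₀ : ℕ) (hx : 1 ≤ x₀)
    (C0 C1 : Matrix (Fin 2) (Fin 2) ℂ)
    (hC0 : C0 ∈ Matrix.unitaryGroup (Fin 2) ℂ) (hC1 : C1 ∈ Matrix.unitaryGroup (Fin 2) ℂ) :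
    ‖z ^ (2 * x₀) - C0 1 0 * C1 0 1‖ ^ 2
        = ‖C0 0 0 * C1 0 0‖ ^ 2
          + ‖C1 1 0 * z ^ (2 * x₀) + C0 1 0 * C1.det‖ ^ 2
      ∧ (z ^ (2 * x₀) ≠ C0 1 0 * C1 0 1 →
          ‖C0 0 0 * C1 0 0 / (z ^ (2 * x₀) - C0 1 0 * C1 0 1)‖ ^ 2
            + ‖
                (C1 1 0 * z ^ (2 * x₀) + C0 1 0 * C1.det) / (z ^ (2 * x₀) - C0 1 0 * C1 0 1)‖ ^ 2
            = 1) := by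
  set cj := starRingEnd ℂ with hcj
  set q : ℂ := z ^ (2 * x₀) with hqdef
  set α : ℂ := C0 0 0
  set a : ℂ := C0 1 0
  set β : ℂ := C1 0 0
  set b : ℂ := C1 0 1
  set c : ℂ := C1 1 0
  set δ : ℂ := C1 1 1
  have hzz : z * cj z = 1 := by
    rw [Complex.mul_conj]
    norm_cast
    rw [← Complex.sq_norm, hz]; norm_num
  have hw : q * cj q = 1 := by
    rw [hqdef, map_pow, ← mul_pow, hzz, one_pow]
  have h2 : cj α * α + cj a * a = 1 := by
    have e := congrFun (congrFun hC0.1 0) 0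
    simpa [Matrix.mul_apply, Fin.sum_univ_two, Matrix.one_apply, Matrix.star_apply] using e
  have h3 : cj β * β + cj c * c = 1 := by
    have e := congrFun (congrFun hC1.1 0) 0
    simpa [Matrix.mul_apply, Fin.sum_univ_two, Matrix.one_apply, Matrix.star_apply] using e
  have h4 : cj δ * δ + cj b * b = 1 := by
    have e := congrFun (congrFun hC1.1 1) 1
    simpa [Matrix.mul_apply, Fin.sum_univ_two, Matrix.one_apply, Matrix.star_apply, add_comm] using e
  have h5 : cj β * b + cj c * δ = 0 := by
    have e := congrFun (congrFun hC1.1 0) 1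
    simpa [Matrix.mul_apply, Fin.sum_univ_two, Matrix.one_apply, Matrix.star_apply] using e
  have h6 : cj b * β + cj δ * c = 0 := by
    have e := congrFun (congrFun hC1.1 1) 0
    simpa [Matrix.mul_apply, Fin.sum_univ_two, Matrix.one_apply, Matrix.star_apply] using e
  have h7 : β * cj β + b * cj b = 1 := by
    have e := congrFun (congrFun hC1.2 0) 0
    simpa [Matrix.mul_apply, Fin.sum_univ_two, Matrix.one_apply, Matrix.star_apply] using e
  have h8 : c * cj c + δ * cj δ = 1 := by
    have e := congrFun (congrFun hC1.2 1) 1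
    simpa [Matrix.mul_apply, Fin.sum_univ_two, Matrix.one_apply, Matrix.star_apply] using e
  have hdD : C1.det = β * δ - b * c := by
    rw [Matrix.det_fin_two]
  have hcd : cj c * (β * δ - b * c) = -b := by
    linear_combination β * h5 - b * h3
  have hbd : cj b * (β * δ - b * c) = -c := by
    linear_combination δ * h6 - c * h4
  have hβd : cj β * (β * δ - b * c) = δ := by
    linear_combination δ * h3 - c * h5
  have hcdc : c * (cj β * cj δ - cj b * cj c) = -(cj b) := by
    have := congrArg cj hcd
    simpa [_root_.map_mul, map_sub, map_neg, Complex.conj_conj, mul_comm] using this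
  have hβdc : β * (cj β * cj δ - cj b * cj c) = cj δ := by
    have := congrArg cj hβd
    simpa [_root_.map_mul, map_sub, map_neg, Complex.conj_conj, mul_comm] using this
  have hbdc : b * (cj β * cj δ - cj b * cj c) = -(cj c) := by
    have := congrArg cj hbd
    simpa [_root_.map_mul, map_sub, map_neg, Complex.conj_conj, mul_comm] using this
  have hdd : (β * δ - b * c) * (cj β * cj δ - cj b * cj c) = 1 := by
    linear_combination cj δ * hβd - cj c * hbd + h8
  have key : (q - a * b) * cj (q - a * b)
      = (α * β) * cj (α * β)
        + (c * q + a * (β * δ - b * c)) * cj (c * q + a * (β * δ - b * c)) := by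
    simp only [map_sub, map_add, _root_.map_mul]
    linear_combination (-(cj q * a)) * hcd + (-(q * cj a)) * hcdc + (-(a * cj a)) * hdd
      + (1 - c * cj c) * hw + (-(β * cj β)) * h2 + (a * cj a) * h7 - h3
  have part1 : ‖q - a * b‖ ^ 2
      = ‖α * β‖ ^ 2 + ‖c * q + a * C1.det‖ ^ 2 := by
    rw [hdD, Complex.sq_norm, Complex.sq_norm, Complex.sq_norm]
    have key' := key
    rw [Complex.mul_conj, Complex.mul_conj, Complex.mul_conj] at key'
    exact_mod_cast key'
  refine ⟨part1, fun hne => ?_⟩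
  have hs : ‖q - a * b‖ ≠ 0 := by
    simp only [ne_eq, norm_eq_zero, sub_eq_zero]
    exact hne
  rw [norm_div, norm_div, div_pow, div_pow, ← add_div, ← part1, div_self]
  exact pow_ne_zero _ hs
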